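/- Let β(t) = ((1-t^2)_+)^2 and b_{z,r}(x) = β(|x-z|/r). Then for all x, y, z ∈ ℝ^d and r > 0 with |y-x| < r, the second-order Taylor remainder satisfies |b_{z,r}(y) − b_{z,r}(x) − ∇b_{z,r}(x)·(y-x)| ≤ 12 d |y-x|^2 / r^2. -/

import Mathlib

open MeasureTheory Real Set Metric

noncomputable def bumpFn (d : ℕ) (z : EuclideanSpace ℝ (Fin d)) (r : ℝ)
    (x : EuclideanSpace ℝ (Fin d)) : ℝ :=
  (max (1 - (dist x z / r) ^ 2) 0) ^ 2

section aux
open Filter Asymptotics InnerProductSpace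

lemma sq_max_hasDerivAt (t : ℝ) : HasDerivAt (fun s : ℝ => max s 0 ^ 2) (2 * max t 0) t := by
  rcases lt_trichotomy t 0 with h | h | h
  · have he : (fun s : ℝ => max s 0 ^ 2) =ᶠ[nhds t] fun _ => (0 : ℝ) := by
      filter_upwards [Iio_mem_nhds h] with s hs
      simp [max_eq_right (le_of_lt (Set.mem_Iio.mp hs))]
    have : HasDerivAt (fun _ : ℝ => (0 : ℝ)) 0 t := hasDerivAt_const t 0
    have := this.congr_of_eventuallyEq he
    simpa [max_eq_right h.le] using this
  · subst h
    rw [hasDerivAt_iff_isLittleO]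
    simp only [max_self, mul_zero, smul_zero, sub_zero, max_eq_right le_rfl,
      ne_eq, OfNat.ofNat_ne_zero, not_false_eq_true, zero_pow]
    have h1 : (fun s : ℝ => max s 0 ^ 2) =O[nhds 0] fun s => s ^ 2 := by
      apply IsBigO.of_bound 1
      filter_upwards with s
      have : max s 0 ^ 2 ≤ s ^ 2 := by
        rcases le_total s 0 with hs | hs
        · simp [max_eq_right hs]; positivity
        · simp [max_eq_left hs]
      simpa [abs_of_nonneg (by positivity : (0:ℝ) ≤ max s 0 ^ 2), sq_abs] using
        this.trans (le_abs_self _)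
    have h2 : (fun s : ℝ => s ^ 2) =o[nhds 0] fun s => s := by
      simpa using isLittleO_pow_id (n := 2) one_lt_two
    exact h1.trans_isLittleO h2
  · have he : (fun s : ℝ => max s 0 ^ 2) =ᶠ[nhds t] fun s => s ^ 2 := by
      filter_upwards [Ioi_mem_nhds h] with s hs
      simp [max_eq_left (le_of_lt (Set.mem_Ioi.mp hs))]
    have : HasDerivAt (fun s : ℝ => s ^ 2) (2 * t) t := by
      simpa using (hasDerivAt_pow 2 t)
    have := this.congr_of_eventuallyEq he
    simpa [max_eq_left h.le] using this


lemma key_aux {d : ℕ} {r : ℝ} (hr : 0 < r) (a b : EuclideanSpace ℝ (Fin d))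
    (hab : ‖b‖ ≤ ‖a‖) :
    ‖max (1 - ‖a‖ ^ 2 / r ^ 2) 0 • a - max (1 - ‖b‖ ^ 2 / r ^ 2) 0 • b‖ ≤ 3 * ‖a - b‖ := by
  set ma := max (1 - ‖a‖ ^ 2 / r ^ 2) 0 with hma
  set mb := max (1 - ‖b‖ ^ 2 / r ^ 2) 0 with hmb
  have hnn : (0:ℝ) ≤ ‖b‖ := norm_nonneg _
  have hsub : ‖a‖ - ‖b‖ ≤ ‖a - b‖ := (abs_le.mp (abs_norm_sub_norm_le a b)).2
  rcases le_or_gt r ‖b‖ with hb | hb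
  · have hmb0 : mb = 0 := by
      rw [hmb, max_eq_right]
      rw [sub_nonpos, le_div_iff₀ (by positivity)]
      nlinarith
    have hma0 : ma = 0 := by
      rw [hma, max_eq_right]
      rw [sub_nonpos, le_div_iff₀ (by positivity)]
      nlinarith
    simp [hma0, hmb0]
  · have hmbv : mb = 1 - ‖b‖ ^ 2 / r ^ 2 := by
      rw [hmb, max_eq_left]
      rw [sub_nonneg, div_le_one (by positivity)]
      nlinarith
    rcases le_or_gt r ‖a‖ with ha | ha
    · have hma0 : ma = 0 := by
        rw [hma, max_eq_right]
        rw [sub_nonpos, le_div_iff₀ (by positivity)]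
        nlinarith
      rw [hma0, zero_smul, zero_sub, norm_neg, norm_smul, Real.norm_eq_abs,
        abs_of_nonneg (le_max_right _ _)]
      have h1 : mb * ‖b‖ ≤ 2 * (‖a‖ - ‖b‖) := by
        rw [hmbv]
        have heq : (1 - ‖b‖ ^ 2 / r ^ 2) * ‖b‖ = (r ^ 2 - ‖b‖ ^ 2) * ‖b‖ / r ^ 2 := by
          field_simp
        rw [heq, div_le_iff₀ (by positivity)]
        have e1 : (r + ‖b‖) * ‖b‖ ≤ 2 * r * r := by nlinarith
        have e2 : (r - ‖b‖) * ((r + ‖b‖) * ‖b‖) ≤ (r - ‖b‖) * (2 * r * r) :=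
          mul_le_mul_of_nonneg_left e1 (by linarith)
        have e3 : (r - ‖b‖) * (2 * r * r) ≤ (‖a‖ - ‖b‖) * (2 * r * r) :=
          mul_le_mul_of_nonneg_right (by linarith) (by positivity)
        nlinarith [e2, e3]
      calc mb * ‖b‖ ≤ 2 * (‖a‖ - ‖b‖) := h1
        _ ≤ 2 * ‖a - b‖ := by linarith
        _ ≤ 3 * ‖a - b‖ := by nlinarith [norm_nonneg (a - b)]
    · have hmav : ma = 1 - ‖a‖ ^ 2 / r ^ 2 := by
        rw [hma, max_eq_left]
        rw [sub_nonneg, div_le_one (by positivity)]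
        nlinarith
      have hsplit : ma • a - mb • b = ma • (a - b) + (ma - mb) • b := by
        rw [smul_sub, sub_smul]; abel
      rw [hsplit]
      have hma1 : ma ≤ 1 := by
        rw [hmav]
        have : (0:ℝ) ≤ ‖a‖ ^ 2 / r ^ 2 := by positivity
        linarith
      have hma0 : 0 ≤ ma := le_max_right _ _
      have hd : |ma - mb| ≤ 2 / r * ‖a - b‖ := by
        rw [hmav, hmbv]
        have he : (1 - ‖a‖ ^ 2 / r ^ 2) - (1 - ‖b‖ ^ 2 / r ^ 2)
            = -((‖a‖ - ‖b‖) * (‖a‖ + ‖b‖) / r ^ 2) := by ring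
        rw [he, abs_neg, abs_of_nonneg
          (div_nonneg (mul_nonneg (by linarith) (by positivity)) (by positivity))]
        rw [div_le_iff₀ (by positivity)]
        have e1 : (‖a‖ - ‖b‖) * (‖a‖ + ‖b‖) ≤ ‖a - b‖ * (2 * r) := by
          nlinarith [mul_nonneg (sub_nonneg.mpr hab)
              (show (0:ℝ) ≤ 2 * r - (‖a‖ + ‖b‖) by linarith),
            mul_le_mul_of_nonneg_right hsub (show (0:ℝ) ≤ 2 * r by linarith)]
        calc (‖a‖ - ‖b‖) * (‖a‖ + ‖b‖) ≤ ‖a - b‖ * (2 * r) := e1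
          _ = 2 / r * ‖a - b‖ * r ^ 2 := by field_simp
      calc ‖ma • (a - b) + (ma - mb) • b‖ ≤ ‖ma • (a - b)‖ + ‖(ma - mb) • b‖ := norm_add_le _ _
        _ = ma * ‖a - b‖ + |ma - mb| * ‖b‖ := by
            rw [norm_smul, norm_smul, Real.norm_eq_abs, Real.norm_eq_abs, abs_of_nonneg hma0]
        _ ≤ 1 * ‖a - b‖ + (2 / r * ‖a - b‖) * r := by
            have h2 : |ma - mb| * ‖b‖ ≤ (2 / r * ‖a - b‖) * r :=
              mul_le_mul hd hb.le hnn (by positivity)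
            have h3 : ma * ‖a - b‖ ≤ 1 * ‖a - b‖ :=
              mul_le_mul_of_nonneg_right hma1 (norm_nonneg _)
            linarith
        _ = 3 * ‖a - b‖ := by field_simp; ring

lemma key {d : ℕ} {r : ℝ} (hr : 0 < r) (a b : EuclideanSpace ℝ (Fin d)) :
    ‖max (1 - ‖a‖ ^ 2 / r ^ 2) 0 • a - max (1 - ‖b‖ ^ 2 / r ^ 2) 0 • b‖ ≤ 3 * ‖a - b‖ := by
  rcases le_total ‖b‖ ‖a‖ with h | h
  · exact key_aux hr a b h
  · rw [norm_sub_rev, norm_sub_rev a b]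
    exact key_aux hr b a h

lemma bump_hasGradientAt {d : ℕ} (z : EuclideanSpace ℝ (Fin d)) {r : ℝ} (hr : 0 < r)
    (x : EuclideanSpace ℝ (Fin d)) :
    HasGradientAt (bumpFn d z r)
      ((-(4 / r ^ 2) * max (1 - ‖x - z‖ ^ 2 / r ^ 2) 0) • (x - z)) x := by
  rw [hasGradientAt_iff_hasFDerivAt]
  have hq : HasFDerivAt (fun w : EuclideanSpace ℝ (Fin d) => ‖w - z‖ ^ 2)
      (2 • (innerSL ℝ (x - z))) x := by
    simpa using ((hasFDerivAt_id x).sub_const z).norm_sq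
  have hu : HasFDerivAt (fun w : EuclideanSpace ℝ (Fin d) => 1 - ‖w - z‖ ^ 2 / r ^ 2)
      ((-(1 / r ^ 2)) • (2 • (innerSL ℝ (x - z)))) x := by
    have h1 := (hq.mul_const ((r ^ 2)⁻¹ : ℝ)).const_sub 1
    have h2 : ((-(1 / r ^ 2)) • ((2:ℕ) • (innerSL ℝ (x - z))) : EuclideanSpace ℝ (Fin d) →L[ℝ] ℝ)
        = -((r ^ 2)⁻¹ • (2:ℕ) • (innerSL ℝ) (x - z)) := by simp only [one_div, neg_smul]
    rw [h2]; simpa only [div_eq_mul_inv] using h1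
  have hcomp := (sq_max_hasDerivAt (1 - ‖x - z‖ ^ 2 / r ^ 2)).comp_hasFDerivAt x hu
  have hbump : bumpFn d z r = fun w => max (1 - ‖w - z‖ ^ 2 / r ^ 2) 0 ^ 2 := by
    funext w
    simp [bumpFn, dist_eq_norm, div_pow]
  rw [hbump]
  refine hcomp.congr_fderiv ?_
  ext w
  simp [toDual_apply_apply, real_inner_smul_left]
  ring

end aux

theorem stmt6 (d : ℕ) (hd : 1 ≤ d) (z : EuclideanSpace ℝ (Fin d)) (r : ℝ) (hr : 0 < r) :
    ∀ x y : EuclideanSpace ℝ (Fin d), dist y x < r →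
      |bumpFn d z r y - bumpFn d z r x -
          (inner ℝ (gradient (bumpFn d z r) x) (y - x) : ℝ)| ≤
        12 * d * (dist y x) ^ 2 / r ^ 2 := by
  intro x y _
  set v : EuclideanSpace ℝ (Fin d) → EuclideanSpace ℝ (Fin d) :=
    fun w => (-(4 / r ^ 2) * max (1 - ‖w - z‖ ^ 2 / r ^ 2) 0) • (w - z) with hv
  have hg : ∀ w, HasGradientAt (bumpFn d z r) (v w) w := fun w => bump_hasGradientAt z hr w
  set G : EuclideanSpace ℝ (Fin d) → (EuclideanSpace ℝ (Fin d) →L[ℝ] ℝ) :=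
    fun w => (InnerProductSpace.toDual ℝ (EuclideanSpace ℝ (Fin d))) (v w) with hG
  have hF : ∀ w, HasFDerivAt (bumpFn d z r) (G w) w := fun w => (hg w).hasFDerivAt
  have hlip : ∀ w₁ w₂, ‖G w₁ - G w₂‖ ≤ 12 / r ^ 2 * ‖w₁ - w₂‖ := by
    intro w₁ w₂
    have h1 : G w₁ - G w₂
        = (InnerProductSpace.toDual ℝ (EuclideanSpace ℝ (Fin d))) (v w₁ - v w₂) := by
      rw [map_sub]
    rw [h1, LinearIsometryEquiv.norm_map]
    have h2 : v w₁ - v w₂ = (-(4 / r ^ 2)) •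
        (max (1 - ‖w₁ - z‖ ^ 2 / r ^ 2) 0 • (w₁ - z)
          - max (1 - ‖w₂ - z‖ ^ 2 / r ^ 2) 0 • (w₂ - z)) := by
      rw [smul_sub, hv]
      simp only [mul_smul]
    rw [h2, norm_smul]
    have h3 := key hr (w₁ - z) (w₂ - z)
    rw [sub_sub_sub_cancel_right] at h3
    have h4 : ‖(-(4 / r ^ 2) : ℝ)‖ = 4 / r ^ 2 := by
      rw [Real.norm_eq_abs, abs_neg, abs_of_nonneg (by positivity)]
    rw [h4]
    calc 4 / r ^ 2 * ‖max (1 - ‖w₁ - z‖ ^ 2 / r ^ 2) 0 • (w₁ - z)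
          - max (1 - ‖w₂ - z‖ ^ 2 / r ^ 2) 0 • (w₂ - z)‖
        ≤ 4 / r ^ 2 * (3 * ‖w₁ - w₂‖) := mul_le_mul_of_nonneg_left h3 (by positivity)
      _ = 12 / r ^ 2 * ‖w₁ - w₂‖ := by ring
  have hderiv : ∀ w ∈ segment ℝ x y,
      HasFDerivWithinAt (fun w => bumpFn d z r w - G x w) (G w - G x) (segment ℝ x y) w :=
    fun w _ => ((hF w).sub ((G x).hasFDerivAt)).hasFDerivWithinAt
  have hbound : ∀ w ∈ segment ℝ x y, ‖G w - G x‖ ≤ 12 / r ^ 2 * ‖y - x‖ := by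
    intro w hw
    refine (hlip w x).trans ?_
    have hwx : ‖w - x‖ ≤ ‖y - x‖ := by
      rw [segment_eq_image'] at hw
      obtain ⟨t, ht, rfl⟩ := hw
      simp only [add_sub_cancel_left]
      rw [norm_smul, Real.norm_eq_abs, abs_of_nonneg ht.1]
      nlinarith [norm_nonneg (y - x), ht.2]
    exact mul_le_mul_of_nonneg_left hwx (by positivity)
  have hmv := Convex.norm_image_sub_le_of_norm_hasFDerivWithin_le hderiv hbound
    (convex_segment x y) (left_mem_segment ℝ x y) (right_mem_segment ℝ x y)
  have heq : bumpFn d z r y - G x y - (bumpFn d z r x - G x x)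
      = bumpFn d z r y - bumpFn d z r x - G x (y - x) := by
    rw [map_sub]
    ring
  rw [heq] at hmv
  have hgrad : gradient (bumpFn d z r) x = v x := (hg x).gradient
  have hinner : (inner ℝ (gradient (bumpFn d z r) x) (y - x) : ℝ) = G x (y - x) := by
    rw [hgrad, hG]
    exact InnerProductSpace.toDual_apply_apply.symm
  rw [hinner, ← Real.norm_eq_abs]
  refine hmv.trans ?_
  rw [dist_eq_norm]
  have hd1 : (1:ℝ) ≤ (d:ℝ) := by exact_mod_cast hd
  calc 12 / r ^ 2 * ‖y - x‖ * ‖y - x‖ = 12 * ‖y - x‖ ^ 2 / r ^ 2 := by ring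
    _ ≤ 12 * d * ‖y - x‖ ^ 2 / r ^ 2 := by
        rw [div_le_div_iff₀ (by positivity) (by positivity)]
        nlinarith [mul_le_mul_of_nonneg_right (show (12:ℝ) ≤ 12 * (d:ℝ) by nlinarith)
          (mul_nonneg (sq_nonneg ‖y - x‖) (sq_nonneg r))]
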